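/- arXiv:1404.3088 — 3 statements merged into one kernel-verified Lean document; each statement's English description precedes it below -/
import Mathlib

section
/- Let {α_j} be an interpolating (Carleson) sequence in the unit disk with δ = inf_j δ_j > 0, where δ_j = ∏_{i≠j} |(α_i - α_j)/(1 - \bar{α}_j α_i)|. Then there are constants c, C > 0 depending only on δ such that for every n, c(1-δ_n²) ≤ ‖(G-I)e_n‖² ≤ C(1-δ_n²). -/
noncomputable abbrev ellTwo : Type := lp (fun _ : ℕ => ℂ) 2

private lemma key_identity (a b : ℂ) :
    ‖1 - (starRingEnd ℂ) b * a‖ ^ 2 - ‖a - b‖ ^ 2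
      = (1 - ‖a‖ ^ 2) * (1 - ‖b‖ ^ 2) := by
  simp only [← Complex.normSq_eq_norm_sq, Complex.normSq_apply, Complex.sub_re, Complex.sub_im,
    Complex.mul_re, Complex.mul_im, Complex.one_re, Complex.one_im, Complex.conj_re,
    Complex.conj_im]
  ring

private lemma one_sub_prod_le_sum (q : ℕ → ℝ) (h0 : ∀ j, 0 ≤ q j) (h1 : ∀ j, q j ≤ 1)
    (F : Finset ℕ) : 1 - ∏ j ∈ F, q j ≤ ∑ j ∈ F, (1 - q j) := by
  classical
  induction F using Finset.induction with
  | empty => simp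
  | insert a s hx ih =>
    rw [Finset.prod_insert hx, Finset.sum_insert hx]
    have hP0 : 0 ≤ ∏ j ∈ s, q j := Finset.prod_nonneg fun j _ => h0 j
    have hP1 : ∏ j ∈ s, q j ≤ 1 := Finset.prod_le_one (fun j _ => h0 j) (fun j _ => h1 j)
    nlinarith [h0 a, h1 a]

private lemma hasProd_iInf (q : ℕ → ℝ) (h0 : ∀ j, 0 ≤ q j) (h1 : ∀ j, q j ≤ 1) :
    HasProd q (⨅ F : Finset ℕ, ∏ j ∈ F, q j) := by
  classical
  apply tendsto_atTop_ciInf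
  · intro s t hst
    calc ∏ j ∈ t, q j = (∏ j ∈ t \ s, q j) * ∏ j ∈ s, q j := (Finset.prod_sdiff hst).symm
    _ ≤ 1 * ∏ j ∈ s, q j :=
        mul_le_mul_of_nonneg_right (Finset.prod_le_one (fun j _ => h0 j) (fun j _ => h1 j))
          (Finset.prod_nonneg fun j _ => h0 j)
    _ = ∏ j ∈ s, q j := one_mul _
  · exact ⟨0, fun x ⟨F, hF⟩ => hF ▸ Finset.prod_nonneg fun j _ => h0 j⟩

set_option maxHeartbeats 1000000 in
theorem gram_column_norm_comparable (α : ℕ → ℂ) (hα : ∀ j, ‖α j‖ < 1)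
    (d : ℕ → ℝ)
    (hd : ∀ n, d n = ∏' i : ℕ, if i = n then 1 else
      ‖(α i - α n) / (1 - (starRingEnd ℂ) (α n) * α i)‖)
    (δ : ℝ) (hδ : 0 < δ) (hsep : ∀ n, δ ≤ d n)
    (G : ellTwo →L[ℂ] ellTwo)
    (hG : ∀ i j : ℕ, (inner ℂ (lp.single 2 i (1:ℂ)) (G (lp.single 2 j (1:ℂ))) : ℂ) =
      ((Real.sqrt ((1 - ‖α i‖ ^ 2) * (1 - ‖α j‖ ^ 2)) : ℝ) : ℂ) /
        (1 - (starRingEnd ℂ) (α i) * α j)) :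
    ∃ c > 0, ∃ C > 0, ∀ n : ℕ,
      c * (1 - d n ^ 2) ≤ ‖(G - 1) (lp.single 2 n (1:ℂ))‖ ^ 2 ∧
      ‖(G - 1) (lp.single 2 n (1:ℂ))‖ ^ 2 ≤ C * (1 - d n ^ 2) := by
  classical
  have habs2 : ∀ j, 0 < 1 - ‖α j‖ ^ 2 := fun j => by
    nlinarith [hα j, norm_nonneg (α j)]
  have hw : ∀ i j : ℕ, (1 : ℂ) - (starRingEnd ℂ) (α i) * α j ≠ 0 := by
    intro i j h
    have h1 : (1 : ℂ) = (starRingEnd ℂ) (α i) * α j := sub_eq_zero.mp h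
    have h2 : (1 : ℝ) = ‖α i‖ * ‖α j‖ := by
      have := congrArg norm h1
      simpa [map_mul] using this
    nlinarith [hα i, hα j, norm_nonneg (α i), norm_nonneg (α j)]
  have habsw : ∀ i j : ℕ, 0 < ‖1 - (starRingEnd ℂ) (α i) * α j‖ :=
    fun i j => norm_pos_iff.mpr (hw i j)
  refine ⟨1, one_pos, 1 / δ ^ 2, by positivity, fun n => ?_⟩
  set v : ellTwo := (G - 1) (lp.single 2 n (1:ℂ)) with hvdef
  set r : ℕ → ℝ := fun i => if i = n then 1 else
      ‖(α i - α n) / (1 - (starRingEnd ℂ) (α n) * α i)‖ with hrdef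
  have hr0 : ∀ i, 0 ≤ r i := by
    intro i; simp only [hrdef]; split <;> [norm_num; exact norm_nonneg _]
  have hr1 : ∀ i, r i ≤ 1 := by
    intro i
    simp only [hrdef]
    split
    · exact le_refl 1
    · rw [norm_div, div_le_one (habsw n i)]
      nlinarith [key_identity (α i) (α n), habs2 i, habs2 n, norm_nonneg (α i - α n),
        habsw n i]
  -- the product
  have hProdr : HasProd r (⨅ F : Finset ℕ, ∏ j ∈ F, r j) := hasProd_iInf r hr0 hr1
  have hdn : d n = ⨅ F : Finset ℕ, ∏ j ∈ F, r j := by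
    rw [hd n]; exact hProdr.tprod_eq
  have hbdd : BddBelow (Set.range fun F : Finset ℕ => ∏ j ∈ F, r j) :=
    ⟨0, fun x ⟨F, hF⟩ => hF ▸ Finset.prod_nonneg fun j _ => hr0 j⟩
  have hdF : ∀ F : Finset ℕ, d n ≤ ∏ j ∈ F, r j := fun F => hdn ▸ ciInf_le hbdd F
  have hd1 : d n ≤ 1 := by simpa using hdF ∅
  have hdδ : δ ≤ d n := hsep n
  have hdpos : 0 < d n := lt_of_lt_of_le hδ hdδ
  have hrge : ∀ j, d n ≤ r j := fun j => by simpa using hdF {j}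
  set q : ℕ → ℝ := fun j => r j ^ 2 with hqdef
  have hq0 : ∀ j, 0 ≤ q j := fun j => sq_nonneg _
  have hq1 : ∀ j, q j ≤ 1 := fun j => by
    simp only [hqdef]; nlinarith [hr0 j, hr1 j]
  have hqge : ∀ j, d n ^ 2 ≤ q j := fun j => by
    simp only [hqdef]; nlinarith [hrge j, hdpos]
  have hqpos : ∀ j, 0 < q j := fun j => lt_of_lt_of_le (by positivity) (hqge j)
  have hProdq : HasProd q (d n ^ 2) := by
    have := hProdr.mul hProdr
    rw [← hdn] at this
    convert this using 1 <;> [skip; ring]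
    funext j; simp [hqdef, sq]
  -- column entries
  have hsingle : ∀ j : ℕ, ((lp.single 2 n (1:ℂ) : ellTwo) : ∀ _ : ℕ, ℂ) j
      = if j = n then 1 else 0 := by
    intro j; rw [lp.single_apply]; simp [Pi.single_apply]
  have happly : ∀ (x : ellTwo) (j : ℕ), (inner ℂ (lp.single 2 j (1:ℂ)) x : ℂ) = x j := by
    intro x j; rw [lp.inner_single_left]; simp [inner]
  have hvj : ∀ j, v j = (G (lp.single 2 n (1:ℂ))) j - (if j = n then 1 else 0) := by
    intro j
    rw [hvdef, ContinuousLinearMap.sub_apply, ContinuousLinearMap.one_apply,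
      lp.coeFn_sub, Pi.sub_apply, hsingle j]
  have hGn : ∀ j, (G (lp.single 2 n (1:ℂ))) j =
      ((Real.sqrt ((1 - ‖α j‖ ^ 2) * (1 - ‖α n‖ ^ 2)) : ℝ) : ℂ) /
        (1 - (starRingEnd ℂ) (α j) * α n) := by
    intro j; rw [← happly, hG j n]
  have hnormv : ∀ j, ‖v j‖ ^ 2 = 1 - q j := by
    intro j
    by_cases hj : j = n
    · subst hj
      have hdiag : (G (lp.single 2 j (1:ℂ))) j = 1 := by
        rw [hGn j]
        rw [show ((1 : ℝ) - ‖α j‖ ^ 2) * (1 - ‖α j‖ ^ 2)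
            = (1 - ‖α j‖ ^ 2) ^ 2 by ring,
          Real.sqrt_sq (le_of_lt (habs2 j))]
        have heq : (1 : ℂ) - (starRingEnd ℂ) (α j) * α j
            = ((1 - ‖α j‖ ^ 2 : ℝ) : ℂ) := by
          simp [Complex.ext_iff, Complex.mul_re, Complex.mul_im, Complex.conj_re,
            Complex.conj_im, ← Complex.normSq_eq_norm_sq, Complex.normSq_apply]
          ring
        rw [heq, div_self]
        exact_mod_cast (habs2 j).ne'
      rw [hvj j, hdiag]
      simp [hqdef, hrdef]
    · rw [hvj j]
      simp only [hj, if_false, sub_zero]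
      rw [hGn j]
      have hA : 0 ≤ (1 - ‖α j‖ ^ 2) * (1 - ‖α n‖ ^ 2) := by
        nlinarith [habs2 j, habs2 n]
      rw [norm_div, div_pow, Complex.norm_real, Real.norm_eq_abs,
        abs_of_nonneg (Real.sqrt_nonneg _), Real.sq_sqrt hA]
      have habseq : ‖1 - (starRingEnd ℂ) (α j) * α n‖
          = ‖1 - (starRingEnd ℂ) (α n) * α j‖ := by
        rw [← Complex.norm_conj (1 - (starRingEnd ℂ) (α j) * α n)]
        congr 1
        simp [map_sub, map_mul]
        ring
      rw [habseq]
      have hq : q j = ‖α j - α n‖ ^ 2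
          / ‖1 - (starRingEnd ℂ) (α n) * α j‖ ^ 2 := by
        simp only [hqdef, hrdef, hj, if_false]
        rw [norm_div, div_pow]
      rw [hq]
      have hwpos := habsw n j
      field_simp
      nlinarith [key_identity (α j) (α n)]
  -- Parseval
  have hnorm : ‖v‖ ^ 2 = ∑' j, (1 - q j) := by
    have h := lp.norm_rpow_eq_tsum (p := 2) (by norm_num) v
    simp only [ENNReal.toReal_ofNat] at h
    have h2 : ‖v‖ ^ (2:ℕ) = ∑' i, ‖v i‖ ^ (2:ℕ) := by
      rw [← Real.rpow_natCast ‖v‖ 2]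
      push_cast
      rw [h]
      congr 1; ext i
      rw [← Real.rpow_natCast ‖v i‖ 2]; push_cast; ring_nf
    rw [h2]
    exact tsum_congr hnormv
  have hsumm : Summable (fun j => 1 - q j) := by
    have hs := (lp.memℓp v).summable (p := 2) (by norm_num)
    simp only [ENNReal.toReal_ofNat] at hs
    have : Summable (fun i => ‖v i‖ ^ (2:ℕ)) := by
      convert hs using 2 with i
      rw [← Real.rpow_natCast ‖v i‖ 2]; norm_num
    exact this.congr hnormv
  constructor
  · -- lower bound
    rw [one_mul, hnorm]
    have ht : Filter.Tendsto (fun F : Finset ℕ => 1 - ∏ j ∈ F, q j)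
        Filter.atTop (nhds (1 - d n ^ 2)) := tendsto_const_nhds.sub hProdq
    refine le_of_tendsto ht (Filter.Eventually.of_forall fun F => ?_)
    calc 1 - ∏ j ∈ F, q j ≤ ∑ j ∈ F, (1 - q j) := one_sub_prod_le_sum q hq0 hq1 F
    _ ≤ ∑' j, (1 - q j) := Summable.sum_le_tsum F (fun j _ => by linarith [hq1 j]) hsumm
  · -- upper bound
    have hlogsum : HasSum (fun j => Real.log (q j)) (Real.log (d n ^ 2)) := by
      have h1 : Filter.Tendsto (fun F : Finset ℕ => Real.log (∏ j ∈ F, q j))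
          Filter.atTop (nhds (Real.log (d n ^ 2))) :=
        ((Real.continuousAt_log (by positivity)).tendsto).comp hProdq
      have h2 : ∀ F : Finset ℕ, Real.log (∏ j ∈ F, q j) = ∑ j ∈ F, Real.log (q j) :=
        fun F => Real.log_prod (s := F) (f := q) fun j _ => (hqpos j).ne'
      exact (h1.congr h2)
    have hstep1 : ‖v‖ ^ 2 ≤ -(Real.log (d n ^ 2)) := by
      rw [hnorm, ← hlogsum.neg.tsum_eq]
      refine Summable.tsum_le_tsum (fun j => ?_) hsumm hlogsum.neg.summable
      have := Real.log_le_sub_one_of_pos (hqpos j)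
      linarith
    have ht2 : (0:ℝ) < d n ^ 2 := by positivity
    have hstep2 : -(Real.log (d n ^ 2)) ≤ (1 - d n ^ 2) / (d n ^ 2) := by
      have hl := Real.log_le_sub_one_of_pos (inv_pos.mpr ht2)
      rw [Real.log_inv] at hl
      have he : (d n ^ 2)⁻¹ - 1 = (1 - d n ^ 2) / (d n ^ 2) := by field_simp
      linarith [he ▸ hl]
    have hstep3 : (1 - d n ^ 2) / (d n ^ 2) ≤ (1 - d n ^ 2) / δ ^ 2 := by
      apply div_le_div_of_nonneg_left ?_ (by positivity) ?_
      · nlinarith [hd1, hdpos]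
      · nlinarith [hdδ, hδ]
    calc ‖v‖ ^ 2 ≤ -(Real.log (d n ^ 2)) := hstep1
    _ ≤ (1 - d n ^ 2) / (d n ^ 2) := hstep2
    _ ≤ (1 - d n ^ 2) / δ ^ 2 := hstep3
    _ = 1 / δ ^ 2 * (1 - d n ^ 2) := by ring
end

section
/- Let T be a bounded operator on a separable Hilbert space and 0 < p ≤ 2. If there exists an orthonormal basis {e_n} with Σ_n ‖T e_n‖^p < ∞, then T ∈ S_p and ‖T‖_{S_p}^p ≤ Σ_n ‖T e_n‖^p. -/
open Filter Topology Finset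


/-- The `n`-th approximation number of `T`: the distance from `T` to operators of rank
at most `n`.  For operators on Hilbert space these coincide with the singular values. -/
noncomputable def approxNumber {H : Type*} [NormedAddCommGroup H]
    [InnerProductSpace ℂ H] (T : H →L[ℂ] H) (n : ℕ) : ℝ :=
  sInf {c : ℝ | ∃ F : H →L[ℂ] H,
    LinearMap.rank (F : H →ₗ[ℂ] H) ≤ (n : Cardinal) ∧ c = ‖T - F‖}

/-- `T` is in the Schatten `p`-class: compact with `p`-summable singular values. -/
def MemSchatten {H : Type*} [NormedAddCommGroup H] [InnerProductSpace ℂ H]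
    (p : ℝ) (T : H →L[ℂ] H) : Prop :=
  IsCompactOperator T ∧ Summable (fun n : ℕ => approxNumber T n ^ p)

namespace SchattenAux

local notation "⟪" x ", " y "⟫" => @inner ℂ _ _ x y

variable {H : Type*} [NormedAddCommGroup H] [InnerProductSpace ℂ H]

lemma approxSet_nonempty (T : H →L[ℂ] H) (n : ℕ) :
    Set.Nonempty {c : ℝ | ∃ F : H →L[ℂ] H,
      LinearMap.rank (F : H →ₗ[ℂ] H) ≤ (n : Cardinal) ∧ c = ‖T - F‖} := by
  refine ⟨‖T - 0‖, 0, ?_, rfl⟩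
  rw [ContinuousLinearMap.coe_zero, LinearMap.rank_zero]
  exact zero_le

lemma approxSet_bddBelow (T : H →L[ℂ] H) (n : ℕ) :
    BddBelow {c : ℝ | ∃ F : H →L[ℂ] H,
      LinearMap.rank (F : H →ₗ[ℂ] H) ≤ (n : Cardinal) ∧ c = ‖T - F‖} :=
  ⟨0, by rintro c ⟨F, -, rfl⟩; exact norm_nonneg _⟩

lemma approxNumber_nonneg (T : H →L[ℂ] H) (n : ℕ) : 0 ≤ approxNumber T n :=
  Real.sInf_nonneg (by rintro c ⟨F, -, rfl⟩; exact norm_nonneg _)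

lemma approxNumber_le (T : H →L[ℂ] H) {n : ℕ} (F : H →L[ℂ] H)
    (h : LinearMap.rank (F : H →ₗ[ℂ] H) ≤ (n : Cardinal)) :
    approxNumber T n ≤ ‖T - F‖ :=
  csInf_le (approxSet_bddBelow T n) ⟨F, h, rfl⟩

lemma approxNumber_le_add (T S : H →L[ℂ] H) (n : ℕ) :
    approxNumber T n ≤ approxNumber S n + ‖T - S‖ := by
  rw [← sub_le_iff_le_add]
  apply le_csInf (approxSet_nonempty S n)
  rintro c ⟨F, hF, rfl⟩
  have h1 : approxNumber T n ≤ ‖T - F‖ := approxNumber_le T F hF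
  have h2 : ‖T - F‖ ≤ ‖T - S‖ + ‖S - F‖ := by
    calc ‖T - F‖ = ‖(T - S) + (S - F)‖ := by abel_nf
    _ ≤ ‖T - S‖ + ‖S - F‖ := norm_add_le _ _
  linarith

lemma abs_approxNumber_sub (T S : H →L[ℂ] H) (n : ℕ) :
    |approxNumber T n - approxNumber S n| ≤ ‖T - S‖ := by
  rw [abs_sub_le_iff]
  constructor
  · have := approxNumber_le_add T S n; linarith
  · have := approxNumber_le_add S T n; rw [norm_sub_rev] at this; linarith

lemma pythagoras {n : ℕ} (v : Fin n → H) (hv : ∀ i j, i ≠ j → ⟪v i, v j⟫ = 0)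
    (s : Finset (Fin n)) : ‖∑ i ∈ s, v i‖ ^ 2 = ∑ i ∈ s, ‖v i‖ ^ 2 := by
  have h : (⟪∑ i ∈ s, v i, ∑ j ∈ s, v j⟫ : ℂ) = ∑ i ∈ s, ((‖v i‖ : ℂ)) ^ 2 := by
    rw [sum_inner]
    refine Finset.sum_congr rfl fun i hi => ?_
    rw [inner_sum]
    rw [Finset.sum_eq_single_of_mem i hi (fun j _ hji => hv i j (Ne.symm hji))]
    exact inner_self_eq_norm_sq_to_K (v i)
  have h2 : RCLike.re (⟪∑ i ∈ s, v i, ∑ j ∈ s, v j⟫ : ℂ) = ∑ i ∈ s, ‖v i‖ ^ 2 := by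
    rw [h, map_sum]
    refine Finset.sum_congr rfl fun i _ => ?_
    simp [RCLike.re_to_complex, ← Complex.ofReal_pow]
  rw [inner_self_eq_norm_sq] at h2
  exact h2

lemma holder_aux {n : ℕ} (w a : Fin n → ℝ) (hw : ∀ i, 0 ≤ w i) (ha : ∀ i, 0 ≤ a i)
    (hw1 : ∑ i, w i ≤ 1) {t : ℝ} (ht0 : 0 < t) (ht1 : t ≤ 1) :
    ∑ i, w i * a i ^ t ≤ (∑ i, w i * a i) ^ t := by
  set W : Fin n ⊕ Unit → ℝ := Sum.elim w (fun _ => 1 - ∑ i, w i) with hW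
  set A : Fin n ⊕ Unit → ℝ := Sum.elim a (fun _ => 0) with hA
  have hWnn : ∀ i, 0 ≤ W i := by
    rintro (i | i)
    · exact hw i
    · exact sub_nonneg.2 hw1
  have hAnn : ∀ i, 0 ≤ A i := by
    rintro (i | i)
    · exact ha i
    · exact le_refl 0
  have hWs : ∑ i, W i = 1 := by
    rw [Fintype.sum_sum_type]; simp [hW]
  have hkey := Real.arith_mean_le_rpow_mean Finset.univ W (fun i => A i ^ t)
    (fun i _ => hWnn i) hWs
    (fun i _ => Real.rpow_nonneg (hAnn i) t)
    (p := 1 / t) (by rw [le_div_iff₀ ht0]; linarith)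
  have hz : ∀ i, (A i ^ t) ^ (1 / t) = A i := fun i => by
    rw [← Real.rpow_mul (hAnn i), mul_one_div, div_self ht0.ne', Real.rpow_one]
  simp only [hz] at hkey
  rw [one_div_one_div] at hkey
  have hL : ∑ i, W i * A i ^ t = ∑ i, w i * a i ^ t := by
    rw [Fintype.sum_sum_type]
    simp [hW, hA, Real.zero_rpow ht0.ne']
  have hR : ∑ i, W i * A i = ∑ i, w i * a i := by
    rw [Fintype.sum_sum_type]
    simp [hW, hA]
  rw [hL, hR] at hkey
  exact hkey

section Core

variable {n : ℕ} (S : H →L[ℂ] H) (f u : Fin n → H)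

/-- finite-rank approximants built from the frame `f` and images `u`. -/
noncomputable def FJ (J : Finset (Fin n)) : H →L[ℂ] H :=
  ∑ i ∈ J, (innerSL ℂ (f i)).smulRight (u i)

lemma FJ_apply (J : Finset (Fin n)) (x : H) :
    FJ f u J x = ∑ i ∈ J, ⟪f i, x⟫ • u i := by
  simp [FJ, ContinuousLinearMap.sum_apply]

lemma rank_FJ (J : Finset (Fin n)) :
    LinearMap.rank ((FJ f u J : H →L[ℂ] H) : H →ₗ[ℂ] H) ≤ (J.card : Cardinal) := by
  classical
  have hle : LinearMap.range ((FJ f u J : H →L[ℂ] H) : H →ₗ[ℂ] H) ≤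
      Submodule.span ℂ (u '' ↑J) := by
    rintro y ⟨x, rfl⟩
    have : (FJ f u J) x = ∑ i ∈ J, ⟪f i, x⟫ • u i := FJ_apply f u J x
    rw [ContinuousLinearMap.coe_coe, this]
    exact Submodule.sum_mem _ fun i hi => Submodule.smul_mem _ _
      (Submodule.subset_span (Set.mem_image_of_mem u hi))
  calc LinearMap.rank ((FJ f u J : H →L[ℂ] H) : H →ₗ[ℂ] H)
      ≤ Module.rank ℂ (Submodule.span ℂ (u '' ↑J)) := Submodule.rank_mono hle
    _ ≤ Cardinal.mk (u '' ↑J) := rank_span_le _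
    _ = ((J.image u).card : Cardinal) := by rw [← Finset.coe_image]; exact Cardinal.mk_coe_finset
    _ ≤ (J.card : Cardinal) := Nat.cast_le.2 Finset.card_image_le

variable {S f u}

lemma norm_sub_FJ_le (hf : Orthonormal ℂ f)
    (hrep : ∀ x, S x = ∑ i, ⟪f i, x⟫ • u i)
    (hortho : ∀ i j, i ≠ j → ⟪u i, u j⟫ = 0)
    (J : Finset (Fin n)) {B : ℝ} (hB : 0 ≤ B) (hJB : ∀ i ∉ J, ‖u i‖ ≤ B) :
    ‖S - FJ f u J‖ ≤ B := by
  refine ContinuousLinearMap.opNorm_le_bound _ hB fun x => ?_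
  have hsub : (S - FJ f u J) x = ∑ i ∈ Finset.univ \ J, ⟪f i, x⟫ • u i := by
    rw [ContinuousLinearMap.sub_apply, hrep x, FJ_apply,
      ← Finset.sum_sdiff (Finset.subset_univ J), add_sub_cancel_right]
  have hpyth : ‖(S - FJ f u J) x‖ ^ 2 = ∑ i ∈ Finset.univ \ J, ‖⟪f i, x⟫‖ ^ 2 * ‖u i‖ ^ 2 := by
    rw [hsub, pythagoras (fun i => ⟪f i, x⟫ • u i) (fun i j hij => by
      rw [inner_smul_left, inner_smul_right, hortho i j hij, mul_zero, mul_zero])]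
    refine Finset.sum_congr rfl fun i _ => ?_
    rw [norm_smul, mul_pow]
  have hsq : ‖(S - FJ f u J) x‖ ^ 2 ≤ (B * ‖x‖) ^ 2 := by
    rw [hpyth]
    calc ∑ i ∈ Finset.univ \ J, ‖⟪f i, x⟫‖ ^ 2 * ‖u i‖ ^ 2
        ≤ ∑ i ∈ Finset.univ \ J, ‖⟪f i, x⟫‖ ^ 2 * B ^ 2 := by
          refine Finset.sum_le_sum fun i hi => ?_
          have hiJ : i ∉ J := (Finset.mem_sdiff.1 hi).2
          exact mul_le_mul_of_nonneg_left
            (pow_le_pow_left₀ (norm_nonneg _) (hJB i hiJ) 2) (by positivity)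
      _ = (∑ i ∈ Finset.univ \ J, ‖⟪f i, x⟫‖ ^ 2) * B ^ 2 := by rw [Finset.sum_mul]
      _ ≤ ‖x‖ ^ 2 * B ^ 2 := by
          refine mul_le_mul_of_nonneg_right ?_ (by positivity)
          exact Orthonormal.sum_inner_products_le x hf
      _ = (B * ‖x‖) ^ 2 := by ring
  calc ‖(S - FJ f u J) x‖ = Real.sqrt (‖(S - FJ f u J) x‖ ^ 2) :=
        (Real.sqrt_sq (norm_nonneg _)).symm
    _ ≤ Real.sqrt ((B * ‖x‖) ^ 2) := Real.sqrt_le_sqrt hsq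
    _ = B * ‖x‖ := Real.sqrt_sq (mul_nonneg hB (norm_nonneg x))

lemma S_eq_FJ_univ (hrep : ∀ x, S x = ∑ i, ⟪f i, x⟫ • u i) :
    S = FJ f u Finset.univ := by
  ext x
  rw [hrep x, FJ_apply]

lemma sum_approx_le_core (hf : Orthonormal ℂ f)
    (hrep : ∀ x, S x = ∑ i, ⟪f i, x⟫ • u i)
    (hortho : ∀ i j, i ≠ j → ⟪u i, u j⟫ = 0)
    {p : ℝ} (hp0 : 0 < p) (M : ℕ) :
    ∑ m ∈ Finset.range M, approxNumber S m ^ p ≤ ∑ i, ‖u i‖ ^ p := by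
  classical
  set σ : Equiv.Perm (Fin n) := Tuple.sort (fun i => -‖u i‖) with hσ
  set g : Fin n → ℝ := fun m => ‖u (σ m)‖ with hg
  have hganti : ∀ m m' : Fin n, m ≤ m' → g m' ≤ g m := by
    intro m m' hmm'
    have h := Tuple.monotone_sort (fun i => -‖u i‖) hmm'
    simpa [hg, hσ] using h
  have hpoint : ∀ m : ℕ, approxNumber S m ^ p ≤
      (if h : m < n then g ⟨m, h⟩ ^ p else 0) := by
    intro m
    by_cases hm : m < n
    · rw [dif_pos hm]
      refine Real.rpow_le_rpow (approxNumber_nonneg S m) ?_ hp0.le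
      set J : Finset (Fin n) :=
        Finset.image σ (Finset.univ.filter fun j : Fin n => (j : ℕ) < m) with hJ
      have hcard : J.card ≤ m := by
        refine le_trans Finset.card_image_le ?_
        have h2 : (Finset.univ.filter fun j : Fin n => (j : ℕ) < m).card
            ≤ (Finset.range m).card :=
          Finset.card_le_card_of_injOn (fun j : Fin n => (j : ℕ))
            (fun j hj => Finset.mem_range.2 (Finset.mem_filter.1 hj).2)
            (fun a _ b _ hab => Fin.val_injective hab)
        simpa using h2
      have hrank : LinearMap.rank ((FJ f u J : H →L[ℂ] H) : H →ₗ[ℂ] H) ≤ (m : Cardinal) :=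
        le_trans (rank_FJ f u J) (by rwa [Nat.cast_le])
      have hout : ∀ i ∉ J, ‖u i‖ ≤ g ⟨m, hm⟩ := by
        intro i hiJ
        have hnot : ¬ ((σ.symm i : ℕ) < m) := by
          intro hlt
          exact hiJ (Finset.mem_image.2 ⟨σ.symm i,
            Finset.mem_filter.2 ⟨Finset.mem_univ _, hlt⟩, σ.apply_symm_apply i⟩)
        have hle : (⟨m, hm⟩ : Fin n) ≤ σ.symm i := Fin.le_def.2 (le_of_not_gt hnot)
        have h3 := hganti ⟨m, hm⟩ (σ.symm i) hle
        calc ‖u i‖ = g (σ.symm i) := by rw [hg]; simp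
          _ ≤ g ⟨m, hm⟩ := h3
      exact le_trans (approxNumber_le S (FJ f u J) hrank)
        (norm_sub_FJ_le hf hrep hortho J (norm_nonneg _) hout)
    · rw [dif_neg hm]
      have hrank : LinearMap.rank ((FJ f u Finset.univ : H →L[ℂ] H) : H →ₗ[ℂ] H)
          ≤ (m : Cardinal) := by
        refine le_trans (rank_FJ f u Finset.univ) ?_
        rw [Nat.cast_le]
        simpa using le_of_not_gt hm
      have h0 := approxNumber_le S (FJ f u Finset.univ) hrank
      rw [← S_eq_FJ_univ hrep, sub_self, norm_zero] at h0
      rw [le_antisymm h0 (approxNumber_nonneg S m), Real.zero_rpow hp0.ne']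
  calc ∑ m ∈ Finset.range M, approxNumber S m ^ p
      ≤ ∑ m ∈ Finset.range M, (if h : m < n then g ⟨m, h⟩ ^ p else 0) :=
        Finset.sum_le_sum fun m _ => hpoint m
    _ ≤ ∑ m ∈ Finset.range (M + n), (if h : m < n then g ⟨m, h⟩ ^ p else 0) := by
        refine Finset.sum_le_sum_of_subset_of_nonneg
          (Finset.range_subset_range.2 (Nat.le_add_right M n)) fun m _ _ => ?_
        by_cases h : m < n
        · rw [dif_pos h]; exact Real.rpow_nonneg (norm_nonneg _) p
        · rw [dif_neg h]
    _ = ∑ m ∈ Finset.range n, (if h : m < n then g ⟨m, h⟩ ^ p else 0) := by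
        refine (Finset.sum_subset (Finset.range_subset_range.2 (Nat.le_add_left n M)) ?_).symm
        intro m _ hm
        rw [dif_neg (by simpa using hm)]
    _ = ∑ i : Fin n, g i ^ p := by
        rw [Finset.sum_range]
        refine Finset.sum_congr rfl fun i _ => ?_
        rw [dif_pos i.isLt]
    _ = ∑ i, ‖u i‖ ^ p := by
        rw [hg]
        exact Equiv.sum_comp σ fun i => ‖u i‖ ^ p

lemma rpow_sq_half (p : ℝ) {x : ℝ} (hx : 0 ≤ x) : (x ^ 2) ^ (p / 2) = x ^ p := by
  rw [← Real.rpow_natCast x 2, ← Real.rpow_mul hx]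
  congr 1
  push_cast
  ring

lemma parseval_hasSum [CompleteSpace H] (e : HilbertBasis ℕ ℂ H) (v : H) (hv : ‖v‖ = 1) :
    HasSum (fun k : ℕ => ‖⟪v, e k⟫‖ ^ 2) 1 := by
  have h := e.hasSum_inner_mul_inner v v
  have h2 : ∀ k : ℕ, ⟪v, e k⟫ * ⟪e k, v⟫ = ((‖⟪v, e k⟫‖ ^ 2 : ℝ) : ℂ) := by
    intro k
    rw [← inner_conj_symm (e k) v, RCLike.mul_conj]
    norm_cast
  simp only [h2] at h
  have h3 : (⟪v, v⟫ : ℂ) = ((1 : ℝ) : ℂ) := by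
    rw [inner_self_eq_norm_sq_to_K, hv]
    norm_num
  rw [h3] at h
  have h4 := (Complex.reCLM : ℂ →L[ℝ] ℝ).hasSum h
  simpa [← Complex.ofReal_pow] using h4

lemma sum_le_tsum_core [CompleteSpace H] (e : HilbertBasis ℕ ℂ H)
    {n : ℕ} {S : H →L[ℂ] H} {f u : Fin n → H} (hf : Orthonormal ℂ f)
    (hrep : ∀ x, S x = ∑ i, ⟪f i, x⟫ • u i)
    (hortho : ∀ i j, i ≠ j → ⟪u i, u j⟫ = 0)
    {p : ℝ} (hp0 : 0 < p) (hp2 : p ≤ 2)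
    (hS : Summable (fun k : ℕ => ‖S (e k)‖ ^ p)) :
    ∑ i, ‖u i‖ ^ p ≤ ∑' k : ℕ, ‖S (e k)‖ ^ p := by
  set w : Fin n → ℕ → ℝ := fun i k => ‖⟪f i, e k⟫‖ ^ 2 with hw
  have hwsum : ∀ i, HasSum (w i) 1 := fun i => parseval_hasSum e (f i) (hf.1 i)
  have hnorm : ∀ k, ‖S (e k)‖ ^ 2 = ∑ i, w i k * ‖u i‖ ^ 2 := by
    intro k
    rw [hrep (e k), pythagoras (fun i => ⟪f i, e k⟫ • u i) (fun i j hij => by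
      rw [inner_smul_left, inner_smul_right, hortho i j hij, mul_zero, mul_zero])]
    refine Finset.sum_congr rfl fun i _ => ?_
    rw [norm_smul, mul_pow]
  have hpoint : ∀ k, ∑ i, w i k * ‖u i‖ ^ p ≤ ‖S (e k)‖ ^ p := by
    intro k
    have hb : ∑ i, w i k ≤ 1 := by
      have h5 := Orthonormal.sum_inner_products_le (s := Finset.univ) (e k) hf
      rwa [e.orthonormal.1 k, one_pow] at h5
    have hj := holder_aux (fun i => w i k) (fun i => ‖u i‖ ^ 2)
      (fun i => sq_nonneg _) (fun i => sq_nonneg _) hb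
      (t := p / 2) (by positivity) (by linarith)
    calc ∑ i, w i k * ‖u i‖ ^ p = ∑ i, w i k * (‖u i‖ ^ 2) ^ (p / 2) := by
          refine Finset.sum_congr rfl fun i _ => ?_
          rw [rpow_sq_half p (norm_nonneg _)]
      _ ≤ (∑ i, w i k * ‖u i‖ ^ 2) ^ (p / 2) := hj
      _ = (‖S (e k)‖ ^ 2) ^ (p / 2) := by rw [hnorm k]
      _ = ‖S (e k)‖ ^ p := rpow_sq_half p (norm_nonneg _)
  have hsummable_wk : ∀ i : Fin n, Summable (fun k => w i k * ‖u i‖ ^ p) := fun i =>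
    (hwsum i).summable.mul_right _
  calc ∑ i, ‖u i‖ ^ p = ∑ i : Fin n, ∑' k : ℕ, w i k * ‖u i‖ ^ p := by
        refine Finset.sum_congr rfl fun i _ => ?_
        rw [tsum_mul_right, (hwsum i).tsum_eq, one_mul]
    _ = ∑' k : ℕ, ∑ i, w i k * ‖u i‖ ^ p := (Summable.tsum_finsetSum (fun i _ => hsummable_wk i)).symm
    _ ≤ ∑' k : ℕ, ‖S (e k)‖ ^ p :=
        Summable.tsum_le_tsum hpoint (summable_sum (fun i _ => hsummable_wk i)) hS

end Core


section Main

variable [CompleteSpace H]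

lemma isCompactOperator_comp_findim {V : Submodule ℂ H} [FiniteDimensional ℂ V]
    (B : V →L[ℂ] H) (P : H →L[ℂ] V) : IsCompactOperator (B.comp P : H →L[ℂ] H) := by
  refine ⟨B '' (Metric.closedBall 0 (‖P‖ + 1)), (isCompact_closedBall _ _).image B.continuous, ?_⟩
  refine Filter.mem_of_superset (Metric.ball_mem_nhds 0 one_pos) ?_
  intro x hx
  refine ⟨P x, ?_, rfl⟩
  rw [Metric.mem_closedBall, dist_zero_right]
  have h1 : ‖P x‖ ≤ ‖P‖ * ‖x‖ := P.le_opNorm x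
  have h2 : ‖x‖ < 1 := by simpa [dist_zero_right] using hx
  nlinarith [norm_nonneg (P : H →L[ℂ] V), norm_nonneg x]

set_option maxHeartbeats 2000000 in
lemma key_step (T : H →L[ℂ] H) (e : HilbertBasis ℕ ℂ H)
    {p : ℝ} (hp0 : 0 < p) (hp2 : p ≤ 2)
    (hsum : Summable (fun k : ℕ => ‖T (e k)‖ ^ p))
    (hc2 : Summable (fun k : ℕ => ‖T (e k)‖ ^ 2)) (N : ℕ) :
    ∃ SN : H →L[ℂ] H,
      (∀ M, ∑ m ∈ Finset.range M, approxNumber SN m ^ p ≤ ∑' k : ℕ, ‖T (e k)‖ ^ p)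
      ∧ ‖T - SN‖ ≤ Real.sqrt (∑' k : ℕ, ‖T (e (k + N))‖ ^ 2)
      ∧ IsCompactOperator SN := by
  classical
  set c : ℕ → ℝ := fun k => ‖T (e k)‖ with hc
  set V : Submodule ℂ H := Submodule.span ℂ (Set.range (fun i : Fin N => e i)) with hV
  haveI : FiniteDimensional ℂ V := FiniteDimensional.span_of_finite ℂ (Set.finite_range _)
  set P := V.orthogonalProjectionOnto with hP
  set SN : H →L[ℂ] H := (T.comp V.subtypeL).comp P with hSN
  have hSNapp : ∀ x, SN x = T ((P x : H)) := fun _ => rfl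
  -- the orthonormal family spanning V
  have hon : Orthonormal ℂ (fun i : Fin N => e i) :=
    e.orthonormal.comp (fun i : Fin N => (i : ℕ)) Fin.val_injective
  have hfr : Module.finrank ℂ V = N := by
    rw [hV, finrank_span_eq_card hon.linearIndependent, Fintype.card_fin]
  -- the symmetric compression of T†T
  set A : V →ₗ[ℂ] V := (P : H →L[ℂ] V).toLinearMap.comp
    (((ContinuousLinearMap.adjoint T).comp T).toLinearMap.comp V.subtype) with hA
  have hAapp : ∀ v : V, A v = P ((ContinuousLinearMap.adjoint T) (T (v : H))) := fun _ => rfl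
  have hAinner : ∀ v w : V, (inner ℂ (A v) w : ℂ) = ⟪T (v : H), T (w : H)⟫ := by
    intro v w
    rw [hAapp, hP]
    rw [Submodule.inner_orthogonalProjectionOnto_eq_of_mem_right]
    rw [ContinuousLinearMap.adjoint_inner_left]
  have hsymm : A.IsSymmetric := by
    intro v w
    rw [hAinner v w]
    have h2 := hAinner w v
    calc (⟪T (v : H), T (w : H)⟫ : ℂ)
        = starRingEnd ℂ (⟪T (w : H), T (v : H)⟫ : ℂ) := (inner_conj_symm _ _).symm
      _ = starRingEnd ℂ (inner ℂ (A w) v : ℂ) := by rw [h2]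
      _ = inner ℂ v (A w) := inner_conj_symm _ _
  set fb := hsymm.eigenvectorBasis hfr with hfb
  set f : Fin N → H := fun i => (fb i : H) with hf
  set u : Fin N → H := fun i => T (f i) with hu
  have hfon : Orthonormal ℂ f := by
    constructor
    · intro i
      have := fb.orthonormal.1 i
      exact this
    · intro i j hij
      have := fb.orthonormal.2 hij
      simpa [hf, Submodule.coe_inner] using this
  have happly : ∀ i, A (fb i) = (hsymm.eigenvalues hfr i : ℂ) • fb i :=
    fun i => hsymm.apply_eigenvectorBasis hfr i
  have hortho : ∀ i j, i ≠ j → ⟪u i, u j⟫ = 0 := by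
    intro i j hij
    have h1 : (⟪u i, u j⟫ : ℂ) = inner ℂ (A (fb i)) (fb j) := (hAinner (fb i) (fb j)).symm
    rw [h1, happly i, inner_smul_left, fb.orthonormal.2 hij, mul_zero]
  have hrep : ∀ x, SN x = ∑ i, ⟪f i, x⟫ • u i := by
    intro x
    rw [hSNapp]
    have h3 : ∀ i, fb.repr (P x) i = (⟪f i, x⟫ : ℂ) := by
      intro i
      rw [fb.repr_apply_apply]
      exact Submodule.inner_orthogonalProjectionOnto_eq_of_mem_left (fb i) x
    have h1 : (P x : H) = ∑ i, (⟪f i, x⟫ : ℂ) • f i := by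
      conv_lhs => rw [← fb.sum_repr (P x)]
      push_cast
      exact Finset.sum_congr rfl fun i _ => by rw [h3 i]
    rw [h1, map_sum]
    refine Finset.sum_congr rfl fun i _ => ?_
    rw [map_smul]
  -- comparison with T on the basis
  have hSNle : ∀ k, ‖SN (e k)‖ ≤ c k := by
    intro k
    rcases lt_or_ge k N with hk | hk
    · have hmem : e k ∈ V := Submodule.subset_span ⟨⟨k, hk⟩, rfl⟩
      have h4 : ((P (e k) : H)) = e k := congrArg Subtype.val (Submodule.orthogonalProjectionOnto_mem_subspace_eq_self ⟨e k, hmem⟩)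
      rw [hSNapp, h4]
    · have hperp : e k ∈ Vᗮ := by
        rw [Submodule.mem_orthogonal]
        intro z hz
        rw [hV] at hz
        induction hz using Submodule.span_induction with
        | mem z hzz =>
            obtain ⟨i, rfl⟩ := hzz
            exact e.orthonormal.2 (by omega : (i : ℕ) ≠ k)
        | zero => exact inner_zero_left _
        | add a b _ _ ha hb => rw [inner_add_left, ha, hb, add_zero]
        | smul r a _ ha => rw [inner_smul_left, ha, mul_zero]
      have h5 : P (e k) = 0 := Submodule.orthogonalProjectionOnto_apply_of_mem_orthogonal hperp
      rw [hSNapp, h5]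
      simp only [ZeroMemClass.coe_zero, map_zero, norm_zero]
      exact norm_nonneg _
  have hSNsum : Summable (fun k : ℕ => ‖SN (e k)‖ ^ p) :=
    Summable.of_nonneg_of_le (fun k => Real.rpow_nonneg (norm_nonneg _) p)
      (fun k => Real.rpow_le_rpow (norm_nonneg _) (hSNle k) hp0.le) hsum
  refine ⟨SN, ?_, ?_, ?_⟩
  · -- sum bound
    intro M
    refine le_trans (sum_approx_le_core hfon hrep hortho hp0 M) ?_
    refine le_trans (sum_le_tsum_core e hfon hrep hortho hp0 hp2 hSNsum) ?_
    exact Summable.tsum_le_tsum (fun k => Real.rpow_le_rpow (norm_nonneg _) (hSNle k) hp0.le) hSNsum hsum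
  · -- operator norm bound
    refine ContinuousLinearMap.opNorm_le_bound _ (Real.sqrt_nonneg _) fun x => ?_
    set y : H := x - (P x : H) with hy
    have hyV : y ∈ Vᗮ := Submodule.sub_starProjection_mem_orthogonal (K := V) x
    have hyV' : ∀ z ∈ V, (⟪z, y⟫ : ℂ) = 0 := (Submodule.mem_orthogonal V y).1 hyV
    have hyx : ‖y‖ ≤ ‖x‖ := by
      have hip : (⟪(P x : H), y⟫ : ℂ) = 0 := hyV' _ (P x).2
      have hdecomp : x = (P x : H) + y := by rw [hy]; abel
      have hpyth2 : ‖x‖ ^ 2 = ‖(P x : H)‖ ^ 2 + ‖y‖ ^ 2 := by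
        conv_lhs => rw [hdecomp]
        rw [norm_add_sq (𝕜 := ℂ), hip]
        simp
      nlinarith [norm_nonneg ((P x : H)), norm_nonneg y, norm_nonneg x]
    have hcoef : ∀ k, k < N → (⟪e k, y⟫ : ℂ) = 0 := fun k hk =>
      hyV' (e k) (Submodule.subset_span ⟨⟨k, hk⟩, rfl⟩)
    have hhs : HasSum (fun k : ℕ => (⟪e k, y⟫ : ℂ) • e k) y := by
      have h6 := e.hasSum_repr y
      simpa [e.repr_apply_apply] using h6
    have hhsT : HasSum (fun k : ℕ => (⟪e k, y⟫ : ℂ) • T (e k)) (T y) := by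
      have h7 := T.hasSum hhs
      simpa [map_smul] using h7
    set gfun : ℕ → ℝ := fun k => ‖(⟪e k, y⟫ : ℂ)‖ * c k with hgfun
    have hgnn : ∀ k, 0 ≤ gfun k := fun k => mul_nonneg (norm_nonneg _) (norm_nonneg _)
    have hgz : ∀ k, k < N → gfun k = 0 := fun k hk => by
      show ‖(⟪e k, y⟫ : ℂ)‖ * c k = 0
      rw [hcoef k hk]
      simp
    set tailN : ℝ := ∑' k : ℕ, c (k + N) ^ 2 with htailN
    have htailsummable : Summable (fun k : ℕ => c (k + N) ^ 2) := (summable_nat_add_iff N).2 hc2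
    have hD : ∀ s : Finset ℕ, ∑ k ∈ s, gfun k ≤ ‖y‖ * Real.sqrt tailN := by
      intro s
      set s' := s.filter (fun k => N ≤ k) with hs'
      have h1 : ∑ k ∈ s, gfun k = ∑ k ∈ s', gfun k := by
        refine (Finset.sum_subset (Finset.filter_subset _ s) fun k hks hknot => ?_).symm
        refine hgz k ?_
        by_contra hkN
        exact hknot (Finset.mem_filter.2 ⟨hks, le_of_not_gt hkN⟩)
      have hCS := Finset.sum_mul_sq_le_sq_mul_sq s' (fun k => ‖(⟪e k, y⟫ : ℂ)‖) c
      have hbes : ∑ k ∈ s', ‖(⟪e k, y⟫ : ℂ)‖ ^ 2 ≤ ‖y‖ ^ 2 :=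
        Orthonormal.sum_inner_products_le (s := s') y e.orthonormal
      have htailb : ∑ k ∈ s', c k ^ 2 ≤ tailN := by
        have himg : ∀ k ∈ s', N ≤ k := fun k hk => (Finset.mem_filter.1 hk).2
        have h6 : ∑ j ∈ s'.image (fun k => k - N), c (j + N) ^ 2 = ∑ k ∈ s', c k ^ 2 := by
          rw [Finset.sum_image (fun a ha b hb hab => by
            have := himg a ha; have := himg b hb; omega)]
          exact Finset.sum_congr rfl fun k hk => by rw [Nat.sub_add_cancel (himg k hk)]
        rw [← h6]
        exact Summable.sum_le_tsum _ (fun j _ => sq_nonneg _) htailsummable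
      have hnn1 : (0:ℝ) ≤ ∑ k ∈ s', gfun k := Finset.sum_nonneg fun k _ => hgnn k
      calc ∑ k ∈ s, gfun k = ∑ k ∈ s', gfun k := h1
        _ = Real.sqrt ((∑ k ∈ s', gfun k) ^ 2) := (Real.sqrt_sq hnn1).symm
        _ ≤ Real.sqrt ((∑ k ∈ s', ‖(⟪e k, y⟫ : ℂ)‖ ^ 2) * ∑ k ∈ s', c k ^ 2) :=
            Real.sqrt_le_sqrt hCS
        _ ≤ Real.sqrt (‖y‖ ^ 2 * tailN) := by
            refine Real.sqrt_le_sqrt (mul_le_mul hbes htailb ?_ (sq_nonneg _))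
            exact Finset.sum_nonneg fun k _ => sq_nonneg _
        _ = ‖y‖ * Real.sqrt tailN := by
            rw [Real.sqrt_mul (sq_nonneg _), Real.sqrt_sq (norm_nonneg y)]
    have hgsummable : Summable gfun :=
      summable_of_sum_range_le hgnn (fun M => hD (Finset.range M))
    have hnormle : ‖T y‖ ≤ ∑' k, gfun k := by
      rw [← hhsT.tsum_eq]
      have heq : (fun k : ℕ => ‖(⟪e k, y⟫ : ℂ) • T (e k)‖) = gfun :=
        funext fun k => by rw [norm_smul]
      have h8 := norm_tsum_le_tsum_norm (f := fun k : ℕ => (⟪e k, y⟫ : ℂ) • T (e k))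
        (by rw [heq]; exact hgsummable)
      rwa [heq] at h8
    have htsle : ∑' k, gfun k ≤ ‖y‖ * Real.sqrt tailN :=
      Summable.tsum_le_of_sum_range_le hgsummable (fun M => hD _)
    have hTy : (T - SN) x = T y := by
      rw [ContinuousLinearMap.sub_apply, hSNapp, hy, map_sub]
    rw [hTy]
    calc ‖T y‖ ≤ ‖y‖ * Real.sqrt tailN := le_trans hnormle htsle
      _ ≤ ‖x‖ * Real.sqrt tailN :=
          mul_le_mul_of_nonneg_right hyx (Real.sqrt_nonneg _)
      _ = Real.sqrt tailN * ‖x‖ := mul_comm _ _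
  · -- compactness
    exact isCompactOperator_comp_findim (T.comp V.subtypeL) P

end Main

end SchattenAux

open SchattenAux Filter Topology in
set_option maxHeartbeats 1000000 in
theorem memSchatten_of_tsum_norm_pow'
    {H : Type*} [NormedAddCommGroup H] [InnerProductSpace ℂ H] [CompleteSpace H]
    (T : H →L[ℂ] H) (p : ℝ) (hp0 : 0 < p) (hp2 : p ≤ 2)
    (e : HilbertBasis ℕ ℂ H) (hsum : Summable (fun n : ℕ => ‖T (e n)‖ ^ p)) :
    (IsCompactOperator T ∧ Summable (fun n : ℕ => approxNumber T n ^ p))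
      ∧ ∑' n : ℕ, approxNumber T n ^ p ≤ ∑' n : ℕ, ‖T (e n)‖ ^ p := by
  classical
  have hc0 : ∀ k : ℕ, (0:ℝ) ≤ ‖T (e k)‖ := fun k => norm_nonneg _
  have hc2 : Summable (fun k : ℕ => ‖T (e k)‖ ^ 2) := by
    have htends : Tendsto (fun k => ‖T (e k)‖ ^ p) atTop (𝓝 0) := hsum.tendsto_atTop_zero
    have hev : ∀ᶠ k in atTop, ‖T (e k)‖ ^ p < 1 := htends.eventually (gt_mem_nhds one_pos)
    obtain ⟨K, hK⟩ := Filter.eventually_atTop.1 hev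
    have hle : ∀ k, ‖T (e (k + K))‖ ^ 2 ≤ ‖T (e (k + K))‖ ^ p := by
      intro k
      rcases eq_or_lt_of_le (hc0 (k + K)) with h0 | h0
      · rw [← h0, Real.zero_rpow hp0.ne']
        norm_num
      · have h1 : ‖T (e (k + K))‖ < 1 := by
          by_contra hge
          push_neg at hge
          have h2 : (1:ℝ) ≤ ‖T (e (k + K))‖ ^ p := by
            calc (1:ℝ) = 1 ^ p := (Real.one_rpow p).symm
              _ ≤ _ := Real.rpow_le_rpow (by norm_num) hge hp0.le
          exact absurd (hK (k + K) (Nat.le_add_left K k)) (not_lt.2 h2)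
        calc ‖T (e (k + K))‖ ^ 2 = ‖T (e (k + K))‖ ^ ((2:ℕ):ℝ) :=
              (Real.rpow_natCast _ 2).symm
          _ ≤ ‖T (e (k + K))‖ ^ p :=
              Real.rpow_le_rpow_of_exponent_ge h0 h1.le (by exact_mod_cast hp2)
    have h2 : Summable (fun k => ‖T (e (k + K))‖ ^ p) := (summable_nat_add_iff K).2 hsum
    exact (summable_nat_add_iff K).1 (Summable.of_nonneg_of_le (fun k => sq_nonneg _) hle h2)
  have hkey := fun N => key_step T e hp0 hp2 hsum hc2 N
  choose S hSbound hSnorm hScompact using hkey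
  have htail : Tendsto (fun N => Real.sqrt (∑' k : ℕ, ‖T (e (k + N))‖ ^ 2)) atTop (𝓝 0) := by
    have h1 : Tendsto (fun N => ∑' k : ℕ, ‖T (e (k + N))‖ ^ 2) atTop (𝓝 0) :=
      tendsto_sum_nat_add (fun n : ℕ => ‖T (e n)‖ ^ 2)
    have h2 := (Real.continuous_sqrt.tendsto 0).comp h1
    simpa [Function.comp_def] using h2
  have hTN : Tendsto (fun N => ‖T - S N‖) atTop (𝓝 0) :=
    squeeze_zero (fun N => norm_nonneg _) hSnorm htail
  have happrox : ∀ m : ℕ, Tendsto (fun N => approxNumber (S N) m) atTop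
      (𝓝 (approxNumber T m)) := by
    intro m
    rw [tendsto_iff_dist_tendsto_zero]
    refine squeeze_zero (fun N => dist_nonneg) (fun N => ?_) hTN
    rw [Real.dist_eq]
    have h3 := abs_approxNumber_sub (S N) T m
    rwa [norm_sub_rev] at h3
  have hbound : ∀ M, ∑ m ∈ Finset.range M, approxNumber T m ^ p
      ≤ ∑' n : ℕ, ‖T (e n)‖ ^ p := by
    intro M
    have h1 : Tendsto (fun N => ∑ m ∈ Finset.range M, approxNumber (S N) m ^ p) atTop
        (𝓝 (∑ m ∈ Finset.range M, approxNumber T m ^ p)) := by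
      refine tendsto_finset_sum _ fun m _ => ?_
      have hcont : ContinuousAt (fun x : ℝ => x ^ p) (approxNumber T m) :=
        Real.continuousAt_rpow_const _ _ (Or.inr hp0.le)
      exact hcont.tendsto.comp (happrox m)
    exact le_of_tendsto h1 (Filter.Eventually.of_forall fun N => hSbound N M)
  have hsummable : Summable (fun m : ℕ => approxNumber T m ^ p) :=
    summable_of_sum_range_le (fun m => Real.rpow_nonneg (approxNumber_nonneg T m) p) hbound
  refine ⟨⟨?_, hsummable⟩, Summable.tsum_le_of_sum_range_le hsummable hbound⟩
  have hTend : Tendsto S atTop (𝓝 T) := by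
    rw [tendsto_iff_norm_sub_tendsto_zero]
    refine squeeze_zero (fun N => norm_nonneg _) (fun N => ?_) htail
    rw [norm_sub_rev]
    exact hSnorm N
  exact isCompactOperator_of_tendsto hTend (Filter.Eventually.of_forall hScompact)

theorem memSchatten_of_tsum_norm_pow
    {H : Type*} [NormedAddCommGroup H] [InnerProductSpace ℂ H] [CompleteSpace H]
    [TopologicalSpace.SeparableSpace H]
    (T : H →L[ℂ] H) (p : ℝ) (hp0 : 0 < p) (hp2 : p ≤ 2)
    (e : HilbertBasis ℕ ℂ H) (hsum : Summable (fun n : ℕ => ‖T (e n)‖ ^ p)) :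
    MemSchatten p T ∧ ∑' n : ℕ, approxNumber T n ^ p ≤ ∑' n : ℕ, ‖T (e n)‖ ^ p := by
  obtain ⟨⟨h1, h2⟩, h3⟩ := memSchatten_of_tsum_norm_pow' T p hp0 hp2 e hsum
  exact ⟨⟨h1, h2⟩, h3⟩
end

section
/- Suppose G is the Gram matrix of an interpolating sequence {α_j} (a bounded invertible operator on ℓ²), D the diagonal operator with entries 1/B_j(α_j), and G^{-1} = D* Gᵗ D. If G - I is compact, then D*D - I is compact, and hence |B_j(α_j)| → 1, i.e., the sequence is thin. -/
open Filter ContinuousLinearMap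
open scoped ENNReal

local notation "ee" j => lp.single (E := fun _ : ℕ => ℂ) 2 j (1:ℂ)

-- coordinate via inner product
lemma coord_inner (j : ℕ) (f : ellTwo) : (inner ℂ (ee j) f : ℂ) = f j := by
  rw [lp.inner_single_left]
  simp [RCLike.inner_apply]

lemma norm_e (j : ℕ) : ‖(ee j : ellTwo)‖ = 1 := by
  have := lp.norm_single (p := 2) (E := fun _ : ℕ => ℂ) (by norm_num) j (1:ℂ)
  simpa using this

-- coordinates of an ℓ² element tend to 0
lemma coord_tendsto (y : ellTwo) : Tendsto (fun j => (y : ∀ _, ℂ) j) atTop (nhds 0) := by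
  have hm : Memℓp (y : ∀ _, ℂ) 2 := lp.memℓp y
  have hs : Summable (fun i => ‖(y : ∀ _, ℂ) i‖ ^ (2:ℝ≥0∞).toReal) :=
    hm.summable (by norm_num)
  have h0 : Tendsto (fun j => ‖(y : ∀ _, ℂ) j‖ ^ (2:ℝ≥0∞).toReal) atTop (nhds 0) :=
    hs.tendsto_atTop_zero
  rw [tendsto_zero_iff_norm_tendsto_zero]
  have key : ∀ j, ‖(y : ∀ _, ℂ) j‖ = Real.sqrt (‖(y : ∀ _, ℂ) j‖ ^ (2:ℝ≥0∞).toReal) := by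
    intro j
    rw [show (2:ℝ≥0∞).toReal = ((2:ℕ):ℝ) by norm_num, Real.rpow_natCast,
      Real.sqrt_sq (norm_nonneg _)]
  have h1 := (Real.continuous_sqrt.tendsto 0).comp h0
  simp only [Real.sqrt_zero, Function.comp] at h1
  exact Tendsto.congr (fun j => (key j).symm) h1

-- diagonal entries of a compact operator tend to zero
lemma diag_to_zero (T : ellTwo →L[ℂ] ellTwo) (hT : IsCompactOperator (T : ellTwo → ellTwo)) :
    Tendsto (fun j => (T (ee j) : ∀ _, ℂ) j) atTop (nhds (0:ℂ)) := by
  obtain ⟨K, hK, hKmem⟩ := hT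
  obtain ⟨r, hr, hball⟩ := Metric.mem_nhds_iff.1 hKmem
  rw [Metric.tendsto_atTop]
  intro ε hε
  set η : ℝ := (r / 2) * ε / 2 with hη
  have hηpos : 0 < η := by positivity
  obtain ⟨t, htfin, htcov⟩ := (Metric.totallyBounded_iff.1 hK.totallyBounded) η hηpos
  -- eventually all centers have small j-th coordinate
  have hev : ∀ᶠ j in atTop, ∀ y ∈ t, ‖(y : ∀ _, ℂ) j‖ < η := by
    rw [htfin.eventually_all]
    intro y _
    have := (coord_tendsto y)
    exact (Metric.tendsto_nhds.1 this η hηpos).mono (fun j hj => by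
      simpa [dist_zero_right] using hj)
  obtain ⟨N, hN⟩ := eventually_atTop.1 hev
  refine ⟨N, fun j hj => ?_⟩
  set c : ℂ := ((r/2 : ℝ) : ℂ) with hc
  have hcnorm : ‖c‖ = r/2 := by
    rw [hc, Complex.norm_real, Real.norm_eq_abs, abs_of_pos (by positivity : (0:ℝ) < r/2)]
  have hmem : T (c • (ee j)) ∈ K := by
    apply hball
    rw [Metric.mem_ball, dist_zero_right, norm_smul, norm_e, hcnorm]
    simp only [mul_one]
    linarith
  obtain ⟨y, hyt, hy⟩ := Set.mem_iUnion₂.1 (htcov hmem)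
  have hcoordbound : ‖(T (c • (ee j)) : ∀ _, ℂ) j‖ < 2 * η := by
    have h1 : ‖(T (c • (ee j)) : ∀ _, ℂ) j - (y : ∀ _, ℂ) j‖ ≤ ‖T (c • (ee j)) - y‖ := by
      have := lp.norm_apply_le_norm (p := 2) (by norm_num) (T (c • (ee j)) - y) j
      rw [lp.coeFn_sub, Pi.sub_apply] at this; exact this
    have h2 : ‖T (c • (ee j)) - y‖ < η := by
      rw [← dist_eq_norm]; exact Metric.mem_ball.1 hy
    have h3 : ‖(y : ∀ _, ℂ) j‖ < η := hN j hj y hyt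
    calc ‖(T (c • (ee j)) : ∀ _, ℂ) j‖
        ≤ ‖(T (c • (ee j)) : ∀ _, ℂ) j - (y : ∀ _, ℂ) j‖ + ‖(y : ∀ _, ℂ) j‖ := by
          simpa using norm_add_le ((T (c • (ee j)) : ∀ _, ℂ) j - (y : ∀ _, ℂ) j) ((y : ∀ _, ℂ) j)
      _ < η + η := by exact add_lt_add (lt_of_le_of_lt h1 h2) h3
      _ = 2 * η := by ring
  have hsc : (T (c • (ee j)) : ∀ _, ℂ) j = c * (T (ee j) : ∀ _, ℂ) j := by
    rw [map_smul]
    have := lp.coeFn_smul c (T (ee j))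
    rw [this]; simp [smul_eq_mul]
  rw [hsc, norm_mul, hcnorm] at hcoordbound
  rw [dist_zero_right]
  have hr2 : (0:ℝ) < r/2 := by positivity
  calc ‖(T (ee j) : ∀ _, ℂ) j‖ = (r/2 * ‖(T (ee j) : ∀ _, ℂ) j‖) / (r/2) := by
        field_simp
    _ < (2 * η) / (r/2) := by
        exact div_lt_div_of_pos_right hcoordbound hr2
    _ = ε := by rw [hη]; field_simp

lemma norm_le_of_coord (x y : ellTwo) (C : ℝ) (hC : 0 ≤ C)
    (h : ∀ j, ‖(y : ∀ _, ℂ) j‖ ≤ C * ‖(x : ∀ _, ℂ) j‖) : ‖y‖ ≤ C * ‖x‖ := by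
  have hp : 0 < (2:ℝ≥0∞).toReal := by norm_num
  have hx : Summable (fun i => ‖(x : ∀ _, ℂ) i‖ ^ (2:ℝ≥0∞).toReal) := (lp.memℓp x).summable hp
  have hy : Summable (fun i => ‖(y : ∀ _, ℂ) i‖ ^ (2:ℝ≥0∞).toReal) := (lp.memℓp y).summable hp
  have hsum : ∑' i, ‖(y : ∀ _, ℂ) i‖ ^ (2:ℝ≥0∞).toReal
      ≤ ∑' i, C ^ (2:ℝ≥0∞).toReal * ‖(x : ∀ _, ℂ) i‖ ^ (2:ℝ≥0∞).toReal := by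
    apply Summable.tsum_le_tsum _ hy (hx.mul_left _)
    intro i
    rw [← Real.mul_rpow hC (norm_nonneg _)]
    exact Real.rpow_le_rpow (norm_nonneg _) (h i) (le_of_lt hp)
  rw [tsum_mul_left] at hsum
  have hnx := lp.norm_rpow_eq_tsum hp x
  have hny := lp.norm_rpow_eq_tsum hp y
  have h2 : ‖y‖ ^ (2:ℝ≥0∞).toReal ≤ (C * ‖x‖) ^ (2:ℝ≥0∞).toReal := by
    rw [hny, Real.mul_rpow hC (norm_nonneg _), hnx]
    exact hsum
  have h2' : ‖y‖ ^ (2:ℕ) ≤ (C * ‖x‖) ^ (2:ℕ) := by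
    have e : (2:ℝ≥0∞).toReal = ((2:ℕ):ℝ) := by norm_num
    rw [e, Real.rpow_natCast, Real.rpow_natCast] at h2
    exact h2
  exact (pow_le_pow_iff_left₀ (norm_nonneg _) (by positivity) (by norm_num)).1 h2'

lemma diag_compact (T : ellTwo →L[ℂ] ellTwo) (c : ℕ → ℂ)
    (hco : ∀ (x : ellTwo) (j : ℕ), (T x : ∀ _, ℂ) j = c j * (x : ∀ _, ℂ) j)
    (hc : Tendsto (fun j => ‖c j‖) atTop (nhds 0)) :
    IsCompactOperator (T : ellTwo → ellTwo) := by
  set A : ℕ → (ellTwo →L[ℂ] ellTwo) :=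
    fun n => ∑ i ∈ Finset.range n, c i • ((innerSL ℂ (ee i)).smulRight (ee i)) with hA
  have hrank : ∀ i : ℕ, IsCompactOperator
      ((c i • ((innerSL ℂ (ee i)).smulRight (ee i))) : ellTwo → ellTwo) := by
    intro i
    have hfun : IsCompactOperator ((innerSL ℂ (ee i)) : ellTwo → ℂ) := by
      refine ⟨Metric.closedBall 0 1, isCompact_closedBall 0 1, ?_⟩
      exact (innerSL ℂ (ee i)).continuous.continuousAt.preimage_mem_nhds
        (by simpa using Metric.closedBall_mem_nhds (0:ℂ) one_pos)
    have hcomp := hfun.clm_comp (ContinuousLinearMap.toSpanSingleton ℂ (ee i : ellTwo))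
    have heq : ((c i • ((innerSL ℂ (ee i)).smulRight (ee i))) : ellTwo → ellTwo)
        = c i • ((ContinuousLinearMap.toSpanSingleton ℂ (ee i : ellTwo)) ∘ (innerSL ℂ (ee i))) := by
      funext x
      simp [ContinuousLinearMap.smulRight_apply, ContinuousLinearMap.toSpanSingleton_apply,
        Function.comp]
    rw [heq]
    exact hcomp.smul (c i)
  have hAcomp : ∀ n : ℕ, IsCompactOperator ((A n : ellTwo →L[ℂ] ellTwo) : ellTwo → ellTwo) := by
    intro n
    induction n with
    | zero => simpa [hA] using isCompactOperator_zero
    | succ n ih =>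
      have : A (n+1) = A n + c n • ((innerSL ℂ (ee n)).smulRight (ee n)) := by
        rw [hA]; exact Finset.sum_range_succ _ n
      rw [this]
      have := ih.add (hrank n)
      convert this using 1
      all_goals rfl
  have hAcoord : ∀ (n : ℕ) (x : ellTwo) (j : ℕ),
      ((A n x : ellTwo) : ∀ _, ℂ) j = if j < n then c j * (x : ∀ _, ℂ) j else 0 := by
    intro n x j
    rw [hA]
    simp only [ContinuousLinearMap.sum_apply]
    rw [lp.coeFn_sum]
    simp only [Finset.sum_apply]
    have : ∀ i ∈ Finset.range n,
        ((c i • ((innerSL ℂ (ee i)).smulRight (ee i))) x : ∀ _, ℂ) j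
        = if j = i then c j * (x : ∀ _, ℂ) j else 0 := by
      intro i _
      simp only [ContinuousLinearMap.smul_apply, ContinuousLinearMap.smulRight_apply,
        innerSL_apply_apply]
      rw [lp.coeFn_smul, Pi.smul_apply, lp.coeFn_smul, Pi.smul_apply]
      rw [coord_inner i x]
      rcases eq_or_ne j i with h | h
      · subst h; rw [lp.single_apply_self]; simp [smul_eq_mul, mul_comm]
      · rw [lp.single_apply_ne _ _ _ h]; simp [h]
    rw [Finset.sum_congr rfl this, Finset.sum_ite_eq (Finset.range n) j
      (fun _ => c j * (x : ∀ _, ℂ) j)]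
    simp [Finset.mem_range]
  -- tendsto
  have htend : Tendsto (fun n => A n) atTop (nhds T) := by
    rw [Metric.tendsto_atTop]
    intro ε hε
    have hev := (Metric.tendsto_nhds.1 hc) (ε/2) (by positivity)
    obtain ⟨N, hN⟩ := eventually_atTop.1 hev
    refine ⟨N, fun n hn => ?_⟩
    have hbound : ∀ x : ellTwo, ‖(A n - T) x‖ ≤ (ε/2) * ‖x‖ := by
      intro x
      apply norm_le_of_coord x _ (ε/2) (by positivity)
      intro j
      have hcoord : (((A n - T) x : ellTwo) : ∀ _, ℂ) j
          = (if j < n then c j * (x : ∀ _, ℂ) j else 0) - c j * (x : ∀ _, ℂ) j := by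
        rw [ContinuousLinearMap.sub_apply, lp.coeFn_sub, Pi.sub_apply, hAcoord, hco]
      rw [hcoord]
      by_cases h : j < n
      · simp [h]; positivity
      · simp only [h, if_neg, ite_false, zero_sub, norm_neg, norm_mul]
        have hjN : N ≤ j := le_trans hn (not_lt.1 h)
        have := hN j hjN
        rw [Real.dist_eq, sub_zero] at this
        have habs : ‖c j‖ < ε/2 := by
          have h0 : 0 ≤ ‖c j‖ := norm_nonneg _
          calc ‖c j‖ ≤ |‖c j‖| := le_abs_self _
            _ < ε/2 := this
        have : ‖c j‖ = ‖c j‖ := rfl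
        rw [this]
        exact mul_le_mul_of_nonneg_right (le_of_lt habs) (norm_nonneg _)
    have hnorm : ‖A n - T‖ ≤ ε/2 := ContinuousLinearMap.opNorm_le_bound _ (by positivity) hbound
    rw [dist_eq_norm]
    calc ‖A n - T‖ ≤ ε/2 := hnorm
      _ < ε := by linarith
  exact isCompactOperator_of_tendsto htend (Filter.Eventually.of_forall hAcomp)

lemma D_coord (D : ellTwo →L[ℂ] ellTwo) (B : ℕ → ℂ)
    (hD : ∀ j, D (lp.single 2 j (1:ℂ)) = (1 / B j) • lp.single 2 j (1:ℂ))
    (x : ellTwo) (j : ℕ) : (D x : ∀ _, ℂ) j = (1 / B j) * (x : ∀ _, ℂ) j := by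
  have hx : HasSum (fun i : ℕ => lp.single 2 i ((x : ∀ _, ℂ) i)) x :=
    lp.hasSum_single (by norm_num) x
  have h2 : HasSum (fun i : ℕ => (inner ℂ (ee j) (D (lp.single 2 i ((x : ∀ _, ℂ) i))) : ℂ))
      (inner ℂ (ee j) (D x) : ℂ) := by
    have := hx.mapL ((innerSL ℂ (ee j)).comp D)
    simpa using this
  have hterm : ∀ i : ℕ, (inner ℂ (ee j) (D (lp.single 2 i ((x : ∀ _, ℂ) i))) : ℂ)
      = if i = j then (1 / B j) * (x : ∀ _, ℂ) j else 0 := by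
    intro i
    have hsingle : lp.single 2 i ((x : ∀ _, ℂ) i) = (x : ∀ _, ℂ) i • (ee i) := by
      rw [← lp.single_smul]; simp [smul_eq_mul]
    rw [hsingle, map_smul, hD i, inner_smul_right, inner_smul_right, coord_inner]
    rcases eq_or_ne i j with h | h
    · subst h; rw [lp.single_apply_self]; simp; ring
    · rw [lp.single_apply_ne _ _ _ (Ne.symm h)]; simp [h]
  have h3 : HasSum (fun i : ℕ => if i = j then (1 / B j) * (x : ∀ _, ℂ) j else 0)
      (inner ℂ (ee j) (D x) : ℂ) := h2.congr_fun (fun i => (hterm i).symm)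
  have h4 := (hasSum_ite_eq j ((1 / B j) * (x : ∀ _, ℂ) j)).unique h3
  rw [← coord_inner j (D x), ← h4]

theorem thin_of_gram_sub_id_compact
    (G Ginv Gt D : ellTwo →L[ℂ] ellTwo)
    (B : ℕ → ℂ) (δ : ℝ) (hδ : 0 < δ) (hB : ∀ j, δ ≤ ‖B j‖)
    (hBle : ∀ j, ‖B j‖ ≤ 1)
    (hD : ∀ j, D (lp.single 2 j (1:ℂ)) = (1 / B j) • lp.single 2 j (1:ℂ))
    (hGt : ∀ i j : ℕ,
      (inner ℂ (lp.single 2 i (1:ℂ)) (Gt (lp.single 2 j (1:ℂ))) : ℂ) =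
      (inner ℂ (lp.single 2 j (1:ℂ)) (G (lp.single 2 i (1:ℂ))) : ℂ))
    (hinv₁ : Ginv.comp G = 1) (hinv₂ : G.comp Ginv = 1)
    (hformula : Ginv = (ContinuousLinearMap.adjoint D).comp (Gt.comp D))
    (hcompact : IsCompactOperator ((G - 1 : ellTwo →L[ℂ] ellTwo) : ellTwo → ellTwo)) :
    IsCompactOperator (((ContinuousLinearMap.adjoint D).comp D - 1 : ellTwo →L[ℂ] ellTwo) : ellTwo → ellTwo) ∧
      Filter.Tendsto (fun j => ‖B j‖) Filter.atTop (nhds 1) := by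
  have hB0 : ∀ j, B j ≠ 0 := by
    intro j h
    have := hB j
    rw [h] at this
    simp at this
    linarith
  set a : ℕ → ℝ := fun j => ‖B j‖ with ha
  have hapos : ∀ j, 0 < a j := fun j => lt_of_lt_of_le hδ (hB j)
  -- Ginv - 1 is compact
  have hGinvC : IsCompactOperator ((Ginv - 1 : ellTwo →L[ℂ] ellTwo) : ellTwo → ellTwo) := by
    have h1 : IsCompactOperator ((Ginv.comp (G - 1) : ellTwo →L[ℂ] ellTwo) : ellTwo → ellTwo) :=
      hcompact.clm_comp Ginv
    have h2 : (Ginv - 1 : ellTwo →L[ℂ] ellTwo) = -(Ginv.comp (G - 1)) := by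
      ext x
      have hx : Ginv (G x) = x := by
        have := ContinuousLinearMap.ext_iff.1 hinv₁ x
        simpa using this
      simp [ContinuousLinearMap.comp_apply, map_sub, hx]
    rw [h2]
    have := h1.neg
    convert this using 1
    all_goals rfl
  -- diagonal entries converge
  have hg : Tendsto (fun j => (G (ee j) : ∀ _, ℂ) j) atTop (nhds 1) := by
    have h0 := diag_to_zero (G - 1) hcompact
    have heq : ∀ j : ℕ, ((G - 1 : ellTwo →L[ℂ] ellTwo) (ee j) : ∀ _, ℂ) j
        = (G (ee j) : ∀ _, ℂ) j - 1 := by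
      intro j
      rw [ContinuousLinearMap.sub_apply, lp.coeFn_sub, Pi.sub_apply,
        ContinuousLinearMap.one_apply, lp.single_apply_self]
    rw [show (fun j => ((G - 1 : ellTwo →L[ℂ] ellTwo) (ee j) : ∀ _, ℂ) j)
        = (fun j => (G (ee j) : ∀ _, ℂ) j - 1) from funext heq] at h0
    have := h0.add_const 1
    simpa using this
  have hh : Tendsto (fun j => (Ginv (ee j) : ∀ _, ℂ) j) atTop (nhds 1) := by
    have h0 := diag_to_zero (Ginv - 1) hGinvC
    have heq : ∀ j : ℕ, ((Ginv - 1 : ellTwo →L[ℂ] ellTwo) (ee j) : ∀ _, ℂ) j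
        = (Ginv (ee j) : ∀ _, ℂ) j - 1 := by
      intro j
      rw [ContinuousLinearMap.sub_apply, lp.coeFn_sub, Pi.sub_apply,
        ContinuousLinearMap.one_apply, lp.single_apply_self]
    rw [show (fun j => ((Ginv - 1 : ellTwo →L[ℂ] ellTwo) (ee j) : ∀ _, ℂ) j)
        = (fun j => (Ginv (ee j) : ∀ _, ℂ) j - 1) from funext heq] at h0
    have := h0.add_const 1
    simpa using this
  -- key relation
  have key : ∀ j, (Ginv (ee j) : ∀ _, ℂ) j
      = ((starRingEnd ℂ) (1 / B j) * (1 / B j)) * (G (ee j) : ∀ _, ℂ) j := by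
    intro j
    rw [← coord_inner j (Ginv (ee j)), hformula]
    rw [ContinuousLinearMap.comp_apply, ContinuousLinearMap.comp_apply]
    rw [ContinuousLinearMap.adjoint_inner_right]
    rw [hD j, inner_smul_left, map_smul, inner_smul_right, hGt j j, coord_inner]
    ring
  -- |B j| → 1
  set q : ℕ → ℝ := fun j => ((a j)⁻¹) ^ 2 with hq
  have habs : ∀ j, ‖(Ginv (ee j) : ∀ _, ℂ) j‖
      = q j * ‖(G (ee j) : ∀ _, ℂ) j‖ := by
    intro j
    rw [key j, norm_mul, norm_mul, Complex.norm_conj]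
    have : ‖1 / B j‖ = (a j)⁻¹ := by
      rw [one_div, norm_inv]
    rw [this, hq]
    ring
  have hgabs : Tendsto (fun j => ‖(G (ee j) : ∀ _, ℂ) j‖) atTop (nhds 1) := by
    have := (continuous_norm.tendsto 1).comp hg
    simpa [Function.comp_def] using this
  have hhabs : Tendsto (fun j => ‖(Ginv (ee j) : ∀ _, ℂ) j‖) atTop (nhds 1) := by
    have := (continuous_norm.tendsto 1).comp hh
    simpa [Function.comp_def] using this
  have hgev : ∀ᶠ j in atTop, ‖(G (ee j) : ∀ _, ℂ) j‖ ≠ 0 := by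
    have := hgabs.eventually (eventually_gt_nhds (by norm_num : (0:ℝ) < 1))
    exact this.mono (fun j hj => ne_of_gt hj)
  have htendq : Tendsto q atTop (nhds 1) := by
    have hdiv : Tendsto (fun j => ‖(Ginv (ee j) : ∀ _, ℂ) j‖
        / ‖(G (ee j) : ∀ _, ℂ) j‖) atTop (nhds 1) := by
      have := hhabs.div hgabs one_ne_zero
      rw [div_one] at this; exact this
    apply hdiv.congr'
    filter_upwards [hgev] with j hj
    rw [habs j, mul_div_assoc, div_self hj, mul_one]
  have htenda : Tendsto a atTop (nhds 1) := by
    have hs : Tendsto (fun j => Real.sqrt (q j)) atTop (nhds 1) := by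
      have := (Real.continuous_sqrt.tendsto 1).comp htendq
      simpa [Function.comp_def] using this
    have hinv : Tendsto (fun j => (Real.sqrt (q j))⁻¹) atTop (nhds 1) := by
      have := hs.inv₀ one_ne_zero
      simpa using this
    apply hinv.congr
    intro j
    rw [hq]
    rw [Real.sqrt_sq (by positivity : (0:ℝ) ≤ (a j)⁻¹)]
    rw [inv_inv]
  refine ⟨?_, by simpa [ha] using htenda⟩
  -- compactness of D*D - 1
  set cC : ℕ → ℂ := fun j => (starRingEnd ℂ) (1 / B j) * (1 / B j) - 1 with hcC
  have hco : ∀ (x : ellTwo) (j : ℕ),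
      ((((ContinuousLinearMap.adjoint D).comp D - 1 : ellTwo →L[ℂ] ellTwo) x : ellTwo) : ∀ _, ℂ) j
      = cC j * (x : ∀ _, ℂ) j := by
    intro x j
    rw [ContinuousLinearMap.sub_apply, lp.coeFn_sub, Pi.sub_apply,
      ContinuousLinearMap.one_apply, ContinuousLinearMap.comp_apply]
    have hadj : ((ContinuousLinearMap.adjoint D) (D x) : ∀ _, ℂ) j
        = (starRingEnd ℂ) (1 / B j) * ((1 / B j) * (x : ∀ _, ℂ) j) := by
      rw [← coord_inner j ((ContinuousLinearMap.adjoint D) (D x)),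
        ContinuousLinearMap.adjoint_inner_right, hD j, inner_smul_left, coord_inner,
        D_coord D B hD]
    rw [hadj, hcC]
    ring
  have hcc : Tendsto (fun j => ‖cC j‖) atTop (nhds 0) := by
    have hval : ∀ j, ‖cC j‖ = |q j - 1| := by
      intro j
      have h1 : (starRingEnd ℂ) (1 / B j) * (1 / B j) = ((q j : ℝ) : ℂ) := by
        rw [mul_comm, Complex.mul_conj]
        congr 1
        rw [Complex.normSq_eq_norm_sq, hq, one_div, norm_inv]
      rw [hcC]
      simp only []
      rw [h1, show ((q j : ℝ) : ℂ) - 1 = (((q j - 1 : ℝ)) : ℂ) by push_cast; ring,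
        Complex.norm_real, Real.norm_eq_abs]
    have h2 : Tendsto (fun j => |q j - 1|) atTop (nhds 0) := by
      have h3 : Tendsto (fun j => q j - 1) atTop (nhds 0) := by
        simpa using htendq.sub_const 1
      have := (continuous_abs.tendsto 0).comp h3
      simpa [Function.comp_def] using this
    exact h2.congr (fun j => (hval j).symm)
  exact diag_compact _ cC hco hcc
end
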